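/- Let g : ℝ → ℝ be of the form g(x) = a + b cos x + c sin x for real constants a, b, c, and let d ≥ 2 be an integer. Then for every x ∈ ℝ, the d-th derivative of g satisfies g^{(d)}(x) = Σ_{i=0}^{d} (−1)^{i+d} C(d,i) · g(x + 2πi/d − π) / (2 sin(π/d))^d, where C(d,i) is the binomial coefficient. -/

import Mathlib

open Real Finset

private lemma ipsr_deriv_aux (a b c : ℝ) (n : ℕ) :
    iteratedDeriv n (fun x => a + b * Real.cos x + c * Real.sin x)
      = fun x => (if n = 0 then a else 0) + b * Real.cos (x + n * (π / 2))
          + c * Real.sin (x + n * (π / 2)) := by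
  induction n with
  | zero => simp [iteratedDeriv_zero]
  | succ n ih =>
    rw [iteratedDeriv_succ, ih]
    funext x
    have h1 : HasDerivAt (fun x : ℝ =>
        (if n = 0 then a else 0) + b * Real.cos (x + n * (π / 2))
          + c * Real.sin (x + n * (π / 2)))
        (b * (-Real.sin (x + n * (π / 2))) + c * Real.cos (x + n * (π / 2))) x := by
      have hc : HasDerivAt (fun x : ℝ => x + (n : ℝ) * (π / 2)) 1 x :=
        (hasDerivAt_id x).add_const _
      have := ((hc.cos.const_mul b).const_add (if n = 0 then a else 0)).add (hc.sin.const_mul c)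
      simpa [Pi.add_def] using this
    rw [h1.deriv]
    have e1 : (x + (n + 1 : ℕ) * (π / 2)) = (x + n * (π/2)) + π/2 := by push_cast; ring
    rw [e1, Real.cos_add_pi_div_two, Real.sin_add_pi_div_two]
    simp

private lemma ipsr_euler_aux (θ : ℝ) :
    -Complex.exp ((2*θ : ℝ) * Complex.I) + 1
      = -(2 * Real.sin θ) * Complex.I * Complex.exp ((θ : ℝ) * Complex.I) := by
  have h2 : ((2 * θ : ℝ) : ℂ) * Complex.I
      = ((θ : ℝ) : ℂ) * Complex.I + ((θ : ℝ) : ℂ) * Complex.I := by push_cast; ring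
  rw [h2, Complex.exp_add, Complex.exp_mul_I, Complex.ofReal_sin]
  linear_combination (Complex.sin (θ : ℂ))^2 * Complex.I_sq
    - Complex.sin_sq_add_cos_sq (θ : ℂ)

private lemma ipsr_I_pow_eq (d : ℕ) :
    Complex.I ^ d = Complex.exp (((d * (π/2) : ℝ)) * Complex.I) := by
  have h1 : Complex.exp (((π/2 : ℝ)) * Complex.I) = Complex.I := by
    rw [Complex.exp_mul_I]; push_cast; simp
  have h2 : ((d * (π/2) : ℝ) : ℂ) * Complex.I = (d : ℕ) * (((π/2 : ℝ) : ℂ) * Complex.I) := by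
    push_cast; ring
  rw [h2, Complex.exp_nat_mul, h1]

private lemma ipsr_keyC (d : ℕ) (hd : 1 ≤ d) (x : ℝ) :
    ∑ i ∈ Finset.range (d + 1),
        (((-1 : ℝ) ^ (i + d) * (d.choose i) : ℝ) : ℂ)
          * Complex.exp ((x + 2 * π * i / d - π : ℝ) * Complex.I)
      = (((2 * Real.sin (π / d)) ^ d : ℝ) : ℂ)
          * Complex.exp ((x + d * (π / 2) : ℝ) * Complex.I) := by
  have hd0 : (d : ℝ) ≠ 0 := Nat.cast_ne_zero.mpr (by omega)
  have hd0c : (d : ℂ) ≠ 0 := Nat.cast_ne_zero.mpr (by omega)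
  set ω : ℂ := Complex.exp (((2 * (π / d) : ℝ)) * Complex.I) with hω
  set E : ℂ := Complex.exp (((x - π : ℝ)) * Complex.I) with hE
  have hterm : ∀ i ∈ Finset.range (d + 1),
      (((-1 : ℝ) ^ (i + d) * (d.choose i) : ℝ) : ℂ)
        * Complex.exp ((x + 2 * π * i / d - π : ℝ) * Complex.I)
      = (-1 : ℂ) ^ d * (E * ((-ω) ^ i * (1:ℂ) ^ (d - i) * (d.choose i))) := by
    intro i _
    have harg : ((x + 2 * π * i / d - π : ℝ) : ℂ) * Complex.I
        = ((x - π : ℝ)) * Complex.I + (i : ℕ) * (((2 * (π / d) : ℝ)) * Complex.I) := by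
      push_cast; field_simp; ring
    rw [harg, Complex.exp_add, Complex.exp_nat_mul, ← hω, ← hE]
    push_cast
    ring
  rw [Finset.sum_congr rfl hterm, ← Finset.mul_sum, ← Finset.mul_sum, ← add_pow]
  have hωval : -ω + 1
      = -(2 * Real.sin (π / d)) * Complex.I * Complex.exp (((π / d : ℝ)) * Complex.I) := by
    rw [hω]; exact ipsr_euler_aux (π / d)
  rw [hωval, mul_pow, mul_pow, ← Complex.exp_nat_mul]
  have hdpi : ((d : ℂ) * (((π / d : ℝ)) * Complex.I)) = ((π : ℝ) : ℂ) * Complex.I := by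
    push_cast
    field_simp
  have hneg : ((-(2 * Real.sin (π / d)) : ℂ)) ^ d
      = (-1)^d * ((2 * Real.sin (π / d) : ℝ) : ℂ) ^ d := by
    rw [show ((-(2 * Real.sin (π / d)) : ℂ)) = -(((2 * Real.sin (π / d) : ℝ)) : ℂ) by
      push_cast; ring, neg_pow]
  rw [hdpi, hneg]
  have hfinal : Complex.exp (((π:ℝ):ℂ) * Complex.I) = -1 := by
    rw [Complex.exp_mul_I]; simp
  rw [hfinal]
  have h11 : ((-1:ℂ)^d) * ((-1:ℂ)^d) = 1 := by rw [← mul_pow]; simp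
  have hEexp : E * Complex.exp (((d : ℝ) * (π/2) : ℝ) * Complex.I)
      = -Complex.exp ((x + (d : ℝ) * (π/2) : ℝ) * Complex.I) := by
    rw [hE, ← Complex.exp_add,
      show ((x - π : ℝ) : ℂ) * Complex.I + (((d : ℝ) * (π/2) : ℝ) : ℂ) * Complex.I
        = ((x + (d : ℝ) * (π/2) : ℝ) : ℂ) * Complex.I - ((π : ℝ) : ℂ) * Complex.I by
          push_cast; ring,
      Complex.exp_sub, hfinal]
    field_simp
  rw [ipsr_I_pow_eq, Complex.ofReal_pow]
  linear_combination (-((-1:ℂ)^d) * ((-1:ℂ)^d) * ((2 * Real.sin (π / d) : ℝ) : ℂ) ^ d) * hEexp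
    + (((2 * Real.sin (π / d) : ℝ) : ℂ) ^ d
        * Complex.exp ((x + (d : ℝ) * (π/2) : ℝ) * Complex.I)) * h11

private lemma ipsr_keyCos (d : ℕ) (hd : 1 ≤ d) (x : ℝ) :
    ∑ i ∈ Finset.range (d + 1),
        (-1 : ℝ) ^ (i + d) * (d.choose i) * Real.cos (x + 2 * π * i / d - π)
      = (2 * Real.sin (π / d)) ^ d * Real.cos (x + d * (π / 2)) := by
  have h := congrArg Complex.re (ipsr_keyC d hd x)
  rw [Complex.re_sum, Complex.re_ofReal_mul, Complex.exp_ofReal_mul_I_re] at h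
  rw [← h]
  exact Finset.sum_congr rfl fun i _ => by
    rw [Complex.re_ofReal_mul, Complex.exp_ofReal_mul_I_re]

private lemma ipsr_keySin (d : ℕ) (hd : 1 ≤ d) (x : ℝ) :
    ∑ i ∈ Finset.range (d + 1),
        (-1 : ℝ) ^ (i + d) * (d.choose i) * Real.sin (x + 2 * π * i / d - π)
      = (2 * Real.sin (π / d)) ^ d * Real.sin (x + d * (π / 2)) := by
  have h := congrArg Complex.im (ipsr_keyC d hd x)
  rw [Complex.im_sum, Complex.im_ofReal_mul, Complex.exp_ofReal_mul_I_im] at h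
  rw [← h]
  exact Finset.sum_congr rfl fun i _ => by
    rw [Complex.im_ofReal_mul, Complex.exp_ofReal_mul_I_im]

private lemma ipsr_alt_zero (d : ℕ) (hd : 1 ≤ d) :
    ∑ i ∈ Finset.range (d + 1), (-1 : ℝ) ^ (i + d) * (d.choose i) = 0 := by
  have hz : (∑ i ∈ Finset.range (d + 1), (-1 : ℝ) ^ i * (d.choose i)) = 0 := by
    have h := Int.alternating_sum_range_choose (n := d)
    rw [if_neg (by omega : d ≠ 0)] at h
    exact_mod_cast h
  calc ∑ i ∈ Finset.range (d + 1), (-1 : ℝ) ^ (i + d) * (d.choose i)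
      = ∑ i ∈ Finset.range (d + 1), (-1 : ℝ) ^ d * ((-1 : ℝ) ^ i * (d.choose i)) :=
        Finset.sum_congr rfl fun i _ => by rw [pow_add]; ring
    _ = (-1 : ℝ) ^ d * ∑ i ∈ Finset.range (d + 1), (-1 : ℝ) ^ i * (d.choose i) :=
        (Finset.mul_sum _ _ _).symm
    _ = 0 := by rw [hz, mul_zero]

/-- iterated parameter shift rule. If `g(x) = a + b cos x + c sin x`
and `d ≥ 2`, then
`g^{(d)}(x) = Σ_{i=0}^{d} (−1)^{i+d} C(d,i) g(x + 2πi/d − π) / (2 sin(π/d))^d`. -/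
theorem iterated_parameter_shift_rule
    (a b c : ℝ) (g : ℝ → ℝ)
    (hg : ∀ x, g x = a + b * Real.cos x + c * Real.sin x)
    (d : ℕ) (hd : 2 ≤ d) (x : ℝ) :
    iteratedDeriv d g x
      = ∑ i ∈ Finset.range (d + 1),
          (-1 : ℝ) ^ (i + d) * (d.choose i)
            * g (x + 2 * Real.pi * i / d - Real.pi)
            / (2 * Real.sin (Real.pi / d)) ^ d := by
  have hd1 : 1 ≤ d := by omega
  have hgfun : g = fun x => a + b * Real.cos x + c * Real.sin x := funext hg
  have hsin : 0 < Real.sin (π / d) := by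
    apply Real.sin_pos_of_pos_of_lt_pi
    · positivity
    · calc π / d ≤ π / 2 := by
            apply div_le_div_of_nonneg_left Real.pi_pos.le (by norm_num)
            exact_mod_cast hd
        _ < π := by linarith [Real.pi_pos]
  have hD : (2 * Real.sin (π / d)) ^ d ≠ 0 := pow_ne_zero _ (by positivity)
  rw [hgfun, ipsr_deriv_aux, if_neg (by omega : d ≠ 0)]
  have hsplit : ∑ i ∈ Finset.range (d + 1),
      (-1 : ℝ) ^ (i + d) * (d.choose i)
        * (a + b * Real.cos (x + 2 * π * i / d - π) + c * Real.sin (x + 2 * π * i / d - π))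
      = (∑ i ∈ Finset.range (d + 1), (-1 : ℝ) ^ (i + d) * (d.choose i)) * a
        + b * (∑ i ∈ Finset.range (d + 1),
            (-1 : ℝ) ^ (i + d) * (d.choose i) * Real.cos (x + 2 * π * i / d - π))
        + c * (∑ i ∈ Finset.range (d + 1),
            (-1 : ℝ) ^ (i + d) * (d.choose i) * Real.sin (x + 2 * π * i / d - π)) := by
    rw [Finset.sum_mul, Finset.mul_sum, Finset.mul_sum, ← Finset.sum_add_distrib,
      ← Finset.sum_add_distrib]
    exact Finset.sum_congr rfl fun i _ => by ring
  calc (0 : ℝ) + b * Real.cos (x + d * (π / 2)) + c * Real.sin (x + d * (π / 2))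
      = (0 * a + b * ((2 * Real.sin (π / d)) ^ d * Real.cos (x + d * (π / 2)))
          + c * ((2 * Real.sin (π / d)) ^ d * Real.sin (x + d * (π / 2))))
          / (2 * Real.sin (π / d)) ^ d := by
        field_simp
        ring
    _ = (∑ i ∈ Finset.range (d + 1),
          (-1 : ℝ) ^ (i + d) * (d.choose i)
            * (a + b * Real.cos (x + 2 * π * i / d - π)
                + c * Real.sin (x + 2 * π * i / d - π)))
          / (2 * Real.sin (π / d)) ^ d := by
        rw [hsplit, ipsr_alt_zero d hd1, ipsr_keyCos d hd1 x, ipsr_keySin d hd1 x]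
    _ = ∑ i ∈ Finset.range (d + 1),
          (-1 : ℝ) ^ (i + d) * (d.choose i)
            * (a + b * Real.cos (x + 2 * π * i / d - π)
                + c * Real.sin (x + 2 * π * i / d - π))
            / (2 * Real.sin (π / d)) ^ d := Finset.sum_div _ _ _
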